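/- In the quantum torus P(Λ) on generators T1,...,T6 with relations as specified, the elements z1 = T1 T4 T6 T3 and z2 = T2 T5 are central, and the center of P(Λ) equals the Laurent polynomial ring K[z1^{±1}, z2^{±1}]. -/

import Mathlib

noncomputable section

/-- The matrix of exponents of `q` in the multiplicatively antisymmetric matrix
`Λ` of `U_q(sl4^+)`: `Λ i j = q ^ (E i j)`. -/
def Emat : Matrix (Fin 6) (Fin 6) ℤ :=
  !![0, 1, 1, -1, -1, 0;
     -1, 0, 1, 1, 0, -1;
     -1, -1, 0, 0, 1, 1;
     1, -1, 0, 0, 1, -1;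
     1, 0, -1, -1, 0, 1;
     0, 1, -1, 1, -1, 0]

/-- The monomial `T₁^{g₁} ⋯ T₆^{g₆}` in a quantum torus with invertible
generators `T : Fin 6 → Pˣ`. -/
def tmono {P : Type} [Ring P] (T : Fin 6 → Pˣ) (g : Fin 6 → ℤ) : P :=
  ((T 0 ^ g 0 * T 1 ^ g 1 * T 2 ^ g 2 * T 3 ^ g 3 * T 4 ^ g 4 * T 5 ^ g 5 : Pˣ) : P)

namespace Stmt11

variable {K : Type} [Field K] {P : Type} [Ring P] [Algebra K P]

lemma smul_flip {q : K} (hq : q ≠ 0) {x y : P} (h : x = q • y) : y = q⁻¹ • x := by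
  rw [h, smul_smul, inv_mul_cancel₀ hq, one_smul]

lemma inv_pass {u : Pˣ} {v : P} {c : K} (hc : c ≠ 0)
    (h : (u : P) * v = c • (v * u)) :
    ((u⁻¹ : Pˣ) : P) * v = c⁻¹ • (v * ((u⁻¹ : Pˣ) : P)) := by
  have h2 : v * ((u⁻¹ : Pˣ) : P) = c • (((u⁻¹ : Pˣ) : P) * v) := by
    calc v * ((u⁻¹ : Pˣ) : P)
        = ((u⁻¹ : Pˣ) : P) * ((u : P) * v) * ((u⁻¹ : Pˣ) : P) := by
          simp [← mul_assoc]
      _ = ((u⁻¹ : Pˣ) : P) * (c • (v * u)) * ((u⁻¹ : Pˣ) : P) := by rw [h]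
      _ = c • (((u⁻¹ : Pˣ) : P) * v) := by
          simp [mul_smul_comm, smul_mul_assoc, mul_assoc]
  exact smul_flip hc h2

lemma pow_pass {u : Pˣ} {v : P} {c : K} (hc : c ≠ 0)
    (h : (u : P) * v = c • (v * u)) (m : ℤ) :
    ((u ^ m : Pˣ) : P) * v = (c ^ m) • (v * ((u ^ m : Pˣ) : P)) := by
  induction m using Int.induction_on with
  | zero => simp
  | succ k ih =>
      have hk : (u ^ ((k : ℤ) + 1) : Pˣ) = u ^ (k : ℤ) * u := zpow_add_one u k
      calc ((u ^ ((k : ℤ) + 1) : Pˣ) : P) * v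
          = ((u ^ (k : ℤ) : Pˣ) : P) * ((u : P) * v) := by
            rw [hk]; simp [mul_assoc]
        _ = ((u ^ (k : ℤ) : Pˣ) : P) * (c • (v * u)) := by rw [h]
        _ = c • (((u ^ (k : ℤ) : Pˣ) : P) * v * (u : P)) := by
            simp [mul_smul_comm, mul_assoc]
        _ = c • ((c ^ (k : ℤ)) • (v * ((u ^ (k : ℤ) : Pˣ) : P)) * (u : P)) := by rw [ih]
        _ = (c ^ ((k : ℤ) + 1)) • (v * ((u ^ ((k : ℤ) + 1) : Pˣ) : P)) := by
            rw [hk, zpow_add_one₀ hc]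
            simp [smul_smul, smul_mul_assoc, mul_assoc, mul_comm]
  | pred k ih =>
      have hk : (u ^ (-(k : ℤ) - 1) : Pˣ) = u ^ (-(k : ℤ)) * u⁻¹ := by
        rw [zpow_sub_one]
      have hinv := inv_pass hc h
      calc ((u ^ (-(k : ℤ) - 1) : Pˣ) : P) * v
          = ((u ^ (-(k : ℤ)) : Pˣ) : P) * (((u⁻¹ : Pˣ) : P) * v) := by
            rw [hk]; simp [mul_assoc]
        _ = ((u ^ (-(k : ℤ)) : Pˣ) : P) * (c⁻¹ • (v * ((u⁻¹ : Pˣ) : P))) := by rw [hinv]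
        _ = c⁻¹ • (((u ^ (-(k : ℤ)) : Pˣ) : P) * v * ((u⁻¹ : Pˣ) : P)) := by
            simp [mul_smul_comm, mul_assoc]
        _ = c⁻¹ • ((c ^ (-(k : ℤ))) • (v * ((u ^ (-(k : ℤ)) : Pˣ) : P)) * ((u⁻¹ : Pˣ) : P)) := by
            rw [ih]
        _ = (c ^ (-(k : ℤ) - 1)) • (v * ((u ^ (-(k : ℤ) - 1) : Pˣ) : P)) := by
            rw [hk, zpow_sub_one₀ hc]
            simp [smul_smul, smul_mul_assoc, mul_assoc, mul_comm]

/-- exponent of `q` when the generator `T i` passes the monomial `T^g` -/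
def nuf (i : Fin 6) (g : Fin 6 → ℤ) : ℤ :=
  Emat i 0 * g 0 + Emat i 1 * g 1 + Emat i 2 * g 2 + Emat i 3 * g 3 +
    Emat i 4 * g 4 + Emat i 5 * g 5

lemma pass_mul {w x y : P} {a b : K} (h1 : w * x = a • (x * w)) (h2 : w * y = b • (y * w)) :
    w * (x * y) = (a * b) • (x * y * w) := by
  calc w * (x * y) = (w * x) * y := by rw [mul_assoc]
    _ = a • (x * (w * y)) := by rw [h1]; simp [smul_mul_assoc, mul_assoc]
    _ = a • (x * (b • (y * w))) := by rw [h2]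
    _ = (a * b) • (x * y * w) := by
        rw [mul_smul_comm, smul_smul, mul_assoc]

section Rel

variable {q : K} (hq0 : q ≠ 0) {T : Fin 6 → Pˣ}
  (hrel : ∀ i j : Fin 6, (T i : P) * T j = (q ^ Emat i j) • ((T j : P) * T i))
include hq0 hrel

lemma gen_pass (i j : Fin 6) (n : ℤ) :
    (T i : P) * ((T j ^ n : Pˣ) : P) = (q ^ (Emat i j * n)) • (((T j ^ n : Pˣ) : P) * T i) := by
  have hc : q ^ Emat i j ≠ 0 := zpow_ne_zero _ hq0
  have h1 : (T j : P) * T i = (q ^ Emat i j)⁻¹ • ((T i : P) * T j) := smul_flip hc (hrel i j)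
  have h2 := pow_pass (inv_ne_zero hc) h1 n
  have h3 := smul_flip (zpow_ne_zero n (inv_ne_zero hc)) h2
  rw [h3]
  congr 1
  rw [inv_zpow, inv_inv, ← zpow_mul]

lemma conj_tmono (i : Fin 6) (g : Fin 6 → ℤ) :
    (T i : P) * tmono T g = (q ^ (nuf i g)) • (tmono T g * T i) := by
  have H := pass_mul (pass_mul (pass_mul (pass_mul
      (pass_mul (gen_pass hq0 hrel i 0 (g 0)) (gen_pass hq0 hrel i 1 (g 1)))
      (gen_pass hq0 hrel i 2 (g 2))) (gen_pass hq0 hrel i 3 (g 3)))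
      (gen_pass hq0 hrel i 4 (g 4))) (gen_pass hq0 hrel i 5 (g 5))
  have ht : tmono T g = ((T 0 ^ g 0 : Pˣ) : P) * ((T 1 ^ g 1 : Pˣ) : P) *
      ((T 2 ^ g 2 : Pˣ) : P) * ((T 3 ^ g 3 : Pˣ) : P) * ((T 4 ^ g 4 : Pˣ) : P) *
      ((T 5 ^ g 5 : Pˣ) : P) := by
    simp [tmono, Units.val_mul, mul_assoc]
  rw [ht]
  calc (T i : P) * _ = _ := H
    _ = (q ^ (nuf i g)) • (_ * (T i : P)) := by
        rw [nuf, ← zpow_add₀ hq0, ← zpow_add₀ hq0, ← zpow_add₀ hq0, ← zpow_add₀ hq0,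
          ← zpow_add₀ hq0]

end Rel

/-- the subgroup of scalar units -/
def scU (K : Type) [Field K] (P : Type) [Ring P] [Algebra K P] : Subgroup Pˣ :=
  (Units.map (algebraMap K P).toMonoidHom).range

instance : (scU K P).Normal := by
  constructor
  intro n hn g
  obtain ⟨c, rfl⟩ := hn
  have : g * Units.map (algebraMap K P).toMonoidHom c * g⁻¹
      = Units.map (algebraMap K P).toMonoidHom c := by
    ext
    push_cast [Units.coe_map]
    calc (g : P) * algebraMap K P c * (g⁻¹ : Pˣ) = algebraMap K P c * g * (g⁻¹ : Pˣ) := by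
          rw [Algebra.commutes]
      _ = algebraMap K P c := by rw [mul_assoc]; simp
  rw [this]
  exact ⟨c, rfl⟩

lemma exists_unit_smul {u v : Pˣ}
    (h : QuotientGroup.mk' (scU K P) u = QuotientGroup.mk' (scU K P) v) :
    ∃ c : Kˣ, (u : P) = (c : K) • (v : P) := by
  obtain ⟨z, hz, hzv⟩ := (QuotientGroup.mk'_eq_mk' _).mp h
  obtain ⟨c, rfl⟩ := hz
  refine ⟨c⁻¹, ?_⟩
  have hv : (v : P) = (c : K) • (u : P) := by
    rw [← hzv, Units.val_mul, Algebra.smul_def]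
    show (u : P) * algebraMap K P (c : K) = algebraMap K P (c : K) * u
    exact (Algebra.commutes _ _).symm
  have := smul_flip (Units.ne_zero c) hv
  simpa using this

lemma mk_T_commute {q : K} {T : Fin 6 → Pˣ} (hq0 : q ≠ 0)
    (hrel : ∀ i j : Fin 6, (T i : P) * T j = (q ^ Emat i j) • ((T j : P) * T i))
    (i j : Fin 6) :
    Commute (QuotientGroup.mk' (scU K P) (T i)) (QuotientGroup.mk' (scU K P) (T j)) := by
  have key : T i * T j = Units.map (algebraMap K P).toMonoidHom
      (Units.mk0 (q ^ Emat i j) (zpow_ne_zero _ hq0)) * (T j * T i) := by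
    ext
    simp only [Units.val_mul, Units.coe_map, MonoidHom.coe_coe, Units.val_mk0]
    rw [hrel i j, Algebra.smul_def]
    rfl
  have h1 : QuotientGroup.mk' (scU K P) (T i * T j)
      = QuotientGroup.mk' (scU K P) (T j * T i) := by
    rw [key, map_mul]
    have : QuotientGroup.mk' (scU K P) (Units.map (algebraMap K P).toMonoidHom
        (Units.mk0 (q ^ Emat i j) (zpow_ne_zero _ hq0))) = 1 := by
      rw [QuotientGroup.mk'_apply, QuotientGroup.eq_one_iff]
      exact ⟨_, rfl⟩
    rw [this, one_mul]
  unfold Commute SemiconjBy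
  rw [← map_mul, ← map_mul, h1]

lemma rearrange {M : Type} [Group M] (s : Fin 6 → M)
    (h : ∀ i j, Commute (s i) (s j)) (a b : ℤ) :
    (s 0 * s 3 * s 5 * s 2) ^ a * (s 1 * s 4) ^ b
      = s 0 ^ a * s 1 ^ b * s 2 ^ a * s 3 ^ a * s 4 ^ b * s 5 ^ a := by
  have swap3 : ∀ (x u v : M), Commute u v → x * u * v = x * v * u := by
    intro x u v huv
    rw [mul_assoc, huv.eq, ← mul_assoc]
  rw [Commute.mul_zpow (((h 0 2).mul_left (h 3 2)).mul_left (h 5 2)),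
      Commute.mul_zpow ((h 0 5).mul_left (h 3 5)),
      Commute.mul_zpow (h 0 3),
      Commute.mul_zpow (h 1 4)]
  rw [← mul_assoc]
  rw [swap3 _ _ _ ((h 2 1).zpow_zpow a b)]
  rw [swap3 _ _ _ ((h 5 1).zpow_zpow a b)]
  rw [swap3 _ _ _ ((h 3 1).zpow_zpow a b)]
  rw [swap3 _ _ _ ((h 5 2).zpow_zpow a a)]
  rw [swap3 _ _ _ ((h 3 2).zpow_zpow a a)]
  rw [swap3 _ _ _ ((h 5 4).zpow_zpow a b)]

/-- exponent vector of `z1^a z2^b` -/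
def gv (a b : ℤ) : Fin 6 → ℤ := ![a, b, a, a, b, a]

lemma nuf_gv (i : Fin 6) (a b : ℤ) : nuf i (gv a b) = 0 := by
  fin_cases i
  · show (0*a + 1*b + 1*a + (-1)*a + (-1)*b + 0*a : ℤ) = 0; ring
  · show (-1*a + 0*b + 1*a + 1*a + 0*b + (-1)*a : ℤ) = 0; ring
  · show (-1*a + (-1)*b + 0*a + 0*a + 1*b + 1*a : ℤ) = 0; ring
  · show (1*a + (-1)*b + 0*a + 0*a + 1*b + (-1)*a : ℤ) = 0; ring
  · show (1*a + 0*b + (-1)*a + (-1)*a + 0*b + 1*a : ℤ) = 0; ring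
  · show (0*a + 1*b + (-1)*a + 1*a + (-1)*b + 0*a : ℤ) = 0; ring

lemma exists_scalar {q : K} {T : Fin 6 → Pˣ} (hq0 : q ≠ 0)
    (hrel : ∀ i j : Fin 6, (T i : P) * T j = (q ^ Emat i j) • ((T j : P) * T i))
    (a b : ℤ) :
    ∃ c : Kˣ, (((T 0 * T 3 * T 5 * T 2 : Pˣ) ^ a * (T 1 * T 4 : Pˣ) ^ b : Pˣ) : P)
      = (c : K) • tmono T (gv a b) := by
  have hmk : QuotientGroup.mk' (scU K P) ((T 0 * T 3 * T 5 * T 2) ^ a * (T 1 * T 4) ^ b)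
      = QuotientGroup.mk' (scU K P)
        (T 0 ^ a * T 1 ^ b * T 2 ^ a * T 3 ^ a * T 4 ^ b * T 5 ^ a) := by
    have := rearrange (fun i => QuotientGroup.mk' (scU K P) (T i))
      (mk_T_commute hq0 hrel) a b
    simpa [map_mul, map_zpow] using this
  obtain ⟨c, hc⟩ := exists_unit_smul hmk
  refine ⟨c, ?_⟩
  rw [hc]
  rfl

lemma zpow_eq_one_imp {q : K} (hq0 : q ≠ 0) (hq : ∀ n : ℕ, 0 < n → q ^ n ≠ 1)
    {m : ℤ} (h : q ^ m = 1) : m = 0 := by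
  rcases m with n | n
  · rcases Nat.eq_zero_or_pos n with h0 | hpos
    · simp [h0]
    · exfalso
      apply hq n hpos
      rw [← zpow_natCast q n]
      exact h
  · exfalso
    apply hq (n + 1) (Nat.succ_pos n)
    have h1 : (q ^ (n + 1) : K)⁻¹ = 1 := by
      rw [← zpow_negSucc q n]; exact h
    rw [← inv_inv (q ^ (n + 1)), h1, inv_one]

lemma zpow_val_mem {A : Subalgebra K P} {u : Pˣ} (h1 : (u : P) ∈ A)
    (h2 : ((u⁻¹ : Pˣ) : P) ∈ A) (n : ℤ) : ((u ^ n : Pˣ) : P) ∈ A := by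
  rcases n with n | n
  · rw [Int.ofNat_eq_coe, zpow_natCast, Units.val_pow_eq_pow_val]
    exact pow_mem h1 n
  · have : (u ^ (Int.negSucc n) : Pˣ) = (u⁻¹) ^ (n + 1) := by
      rw [zpow_negSucc, inv_pow]
    rw [this, Units.val_pow_eq_pow_val]
    exact pow_mem h2 (n + 1)

lemma central_of_T_comm {T : Fin 6 → Pˣ}
    (hspan : Submodule.span K (Set.range (tmono T)) = ⊤) (z : P)
    (h : ∀ i, (T i : P) * z = z * T i) : z ∈ Subalgebra.center K P := by
  have hc : ∀ j : Fin 6, Commute z ((T j : Pˣ) : P) := fun j => (h j).symm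
  have hmono : ∀ g, Commute z (tmono T g) := by
    intro g
    show Commute z _
    simp only [tmono, Units.val_mul]
    exact ((((((hc 0).units_zpow_right (g 0)).mul_right
      ((hc 1).units_zpow_right (g 1))).mul_right
      ((hc 2).units_zpow_right (g 2))).mul_right
      ((hc 3).units_zpow_right (g 3))).mul_right
      ((hc 4).units_zpow_right (g 4))).mul_right
      ((hc 5).units_zpow_right (g 5))
  rw [Subalgebra.mem_center_iff]
  intro b
  have hb : b ∈ Subalgebra.toSubmodule (Subalgebra.centralizer K {z}) := by
    have hle : Submodule.span K (Set.range (tmono T))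
        ≤ Subalgebra.toSubmodule (Subalgebra.centralizer K {z}) := by
      rw [Submodule.span_le]
      rintro _ ⟨g, rfl⟩
      show tmono T g ∈ Subalgebra.centralizer K {z}
      rw [Subalgebra.mem_centralizer_iff]
      rintro y hy
      rw [Set.mem_singleton_iff] at hy
      subst hy
      exact (hmono g).eq
    exact hle (hspan ▸ Submodule.mem_top)
  have := (Subalgebra.mem_centralizer_iff K).mp hb z (Set.mem_singleton z)
  exact this.symm

lemma inv_central {u : Pˣ} (h : (u : P) ∈ Subalgebra.center K P) :
    ((u⁻¹ : Pˣ) : P) ∈ Subalgebra.center K P := by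
  rw [Subalgebra.mem_center_iff] at h ⊢
  intro b
  have h1 : (u : P) * b = b * u := (h b).symm
  calc b * ((u⁻¹ : Pˣ) : P)
      = ((u⁻¹ : Pˣ) : P) * ((u : P) * b) * ((u⁻¹ : Pˣ) : P) := by
        simp [← mul_assoc]
    _ = ((u⁻¹ : Pˣ) : P) * (b * (u : P)) * ((u⁻¹ : Pˣ) : P) := by rw [h1]
    _ = ((u⁻¹ : Pˣ) : P) * b := by
        rw [mul_assoc, mul_assoc]; simp

end Stmt11

open Stmt11 in
theorem stmt11 (K : Type) [Field K] (q : K) (hq0 : q ≠ 0)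
    (hq : ∀ n : ℕ, 0 < n → q ^ n ≠ 1)
    (P : Type) [Ring P] [Algebra K P] (T : Fin 6 → Pˣ)
    (hrel : ∀ i j : Fin 6, (T i : P) * T j = (q ^ Emat i j) • ((T j : P) * T i))
    (hli : LinearIndependent K (tmono T))
    (hspan : Submodule.span K (Set.range (tmono T)) = ⊤) :
    ((T 0 * T 3 * T 5 * T 2 : Pˣ) : P) ∈ Subalgebra.center K P ∧
    ((T 1 * T 4 : Pˣ) : P) ∈ Subalgebra.center K P ∧
    (Subalgebra.center K P : Subalgebra K P) =
      Algebra.adjoin K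
        {((T 0 * T 3 * T 5 * T 2 : Pˣ) : P), ((T 1 * T 4 : Pˣ) : P),
         (((T 0 * T 3 * T 5 * T 2 : Pˣ)⁻¹ : Pˣ) : P), (((T 1 * T 4 : Pˣ)⁻¹ : Pˣ) : P)} ∧
    LinearIndependent K
      (fun p : ℤ × ℤ =>
        (((T 0 * T 3 * T 5 * T 2 : Pˣ) ^ p.1 * (T 1 * T 4 : Pˣ) ^ p.2 : Pˣ) : P)) := by
  classical
  have hex : ∀ a b : ℤ, ∃ c : Kˣ,
      (((T 0 * T 3 * T 5 * T 2 : Pˣ) ^ a * (T 1 * T 4 : Pˣ) ^ b : Pˣ) : P)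
        = (c : K) • tmono T (gv a b) := fun a b => Stmt11.exists_scalar hq0 hrel a b
  have hz1 : ((T 0 * T 3 * T 5 * T 2 : Pˣ) : P) ∈ Subalgebra.center K P := by
    obtain ⟨c, hc⟩ := hex 1 0
    have hc' : ((T 0 * T 3 * T 5 * T 2 : Pˣ) : P) = (c : K) • tmono T (gv 1 0) := by
      simpa using hc
    apply central_of_T_comm hspan
    intro i
    rw [hc', mul_smul_comm, conj_tmono hq0 hrel, nuf_gv, zpow_zero, one_smul, smul_mul_assoc]
  have hz2 : ((T 1 * T 4 : Pˣ) : P) ∈ Subalgebra.center K P := by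
    obtain ⟨c, hc⟩ := hex 0 1
    have hc' : ((T 1 * T 4 : Pˣ) : P) = (c : K) • tmono T (gv 0 1) := by
      simpa using hc
    apply central_of_T_comm hspan
    intro i
    rw [hc', mul_smul_comm, conj_tmono hq0 hrel, nuf_gv, zpow_zero, one_smul, smul_mul_assoc]
  refine ⟨hz1, hz2, ?_, ?_⟩
  · apply le_antisymm
    · intro x hx
      obtain ⟨c, hc⟩ := Finsupp.mem_span_range_iff_exists_finsupp.mp
        (show x ∈ Submodule.span K (Set.range (tmono T)) by
          rw [hspan]; exact Submodule.mem_top)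
      have hcoef : ∀ i : Fin 6, ∀ g : Fin 6 → ℤ, (q ^ nuf i g - 1) * c g = 0 := by
        intro i
        have hxi : (T i : P) * x = x * T i := Subalgebra.mem_center_iff.mp hx (T i)
        have hy : (c.sum fun g a => ((q ^ nuf i g - 1) * a) • tmono T g) * (T i : P) = 0 := by
          simp only [Finsupp.sum]
          rw [Finset.sum_mul]
          have hterm : ∀ g ∈ c.support,
              (((q ^ nuf i g - 1) * c g) • tmono T g) * (T i : P)
              = (q ^ nuf i g * c g) • (tmono T g * T i) - (c g) • (tmono T g * T i) := by
            intro g _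
            rw [smul_mul_assoc, sub_mul, one_mul, sub_smul]
          rw [Finset.sum_congr rfl hterm, Finset.sum_sub_distrib]
          have e1 : ∑ g ∈ c.support, (q ^ nuf i g * c g) • (tmono T g * (T i : P))
              = (T i : P) * x := by
            rw [← hc]
            simp only [Finsupp.sum]
            rw [Finset.mul_sum]
            refine Finset.sum_congr rfl fun g _ => ?_
            rw [mul_smul_comm, conj_tmono hq0 hrel, smul_smul, mul_comm]
          have e2 : ∑ g ∈ c.support, (c g) • (tmono T g * (T i : P)) = x * T i := by
            rw [← hc]
            simp only [Finsupp.sum]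
            rw [Finset.sum_mul]
            refine Finset.sum_congr rfl fun g _ => ?_
            rw [smul_mul_assoc]
          rw [e1, e2, hxi, sub_self]
        have hy0 : (c.sum fun g a => ((q ^ nuf i g - 1) * a) • tmono T g) = 0 := by
          have h2 := congrArg (fun w => w * (((T i)⁻¹ : Pˣ) : P)) hy
          simpa [mul_assoc] using h2
        intro g
        have hlc : Finsupp.linearCombination K (tmono T)
            (Finsupp.onFinset c.support (fun g => (q ^ nuf i g - 1) * c g)
              (fun g hg => Finsupp.mem_support_iff.mpr
                (fun h0 => hg (by simp [h0])))) = 0 := by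
          rw [Finsupp.linearCombination_onFinset]
          simp only [Finsupp.sum] at hy0
          exact hy0
        have hl0 := linearIndependent_iff.mp hli _ hlc
        have := DFunLike.congr_fun hl0 g
        simpa using this
      rw [← hc]
      simp only [Finsupp.sum]
      apply Subalgebra.sum_mem
      intro g hg
      apply Subalgebra.smul_mem
      have hcg : c g ≠ 0 := Finsupp.mem_support_iff.mp hg
      have hnu : ∀ i : Fin 6, nuf i g = 0 := by
        intro i
        rcases mul_eq_zero.mp (hcoef i g) with h' | h'
        · exact zpow_eq_one_imp hq0 hq (sub_eq_zero.mp h')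
        · exact absurd h' hcg
      have e0 : 0 * g 0 + 1 * g 1 + 1 * g 2 + (-1) * g 3 + (-1) * g 4 + 0 * g 5 = 0 := hnu 0
      have e1 : (-1) * g 0 + 0 * g 1 + 1 * g 2 + 1 * g 3 + 0 * g 4 + (-1) * g 5 = 0 := hnu 1
      have e2 : (-1) * g 0 + (-1) * g 1 + 0 * g 2 + 0 * g 3 + 1 * g 4 + 1 * g 5 = 0 := hnu 2
      have e3 : 1 * g 0 + (-1) * g 1 + 0 * g 2 + 0 * g 3 + 1 * g 4 + (-1) * g 5 = 0 := hnu 3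
      have e4 : 1 * g 0 + 0 * g 1 + (-1) * g 2 + (-1) * g 3 + 0 * g 4 + 1 * g 5 = 0 := hnu 4
      have hgv : g = gv (g 0) (g 1) := by
        have h2 : g 2 = g 0 := by omega
        have h3 : g 3 = g 0 := by omega
        have h4 : g 4 = g 1 := by omega
        have h5 : g 5 = g 0 := by omega
        funext k
        fin_cases k
        · rfl
        · rfl
        · exact h2
        · exact h3
        · exact h4
        · exact h5
      obtain ⟨u, hu⟩ := hex (g 0) (g 1)
      have ht : tmono T g = ((u : K))⁻¹ •
          (((T 0 * T 3 * T 5 * T 2 : Pˣ) ^ (g 0) * (T 1 * T 4 : Pˣ) ^ (g 1) : Pˣ) : P) := by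
        rw [hgv]
        exact smul_flip (Units.ne_zero u) hu
      rw [ht]
      apply Subalgebra.smul_mem
      rw [Units.val_mul]
      have hA : ((T 0 * T 3 * T 5 * T 2 : Pˣ) : P) ∈
          ({((T 0 * T 3 * T 5 * T 2 : Pˣ) : P), ((T 1 * T 4 : Pˣ) : P),
            (((T 0 * T 3 * T 5 * T 2 : Pˣ)⁻¹ : Pˣ) : P),
            (((T 1 * T 4 : Pˣ)⁻¹ : Pˣ) : P)} : Set P) := by simp
      have hB : ((T 1 * T 4 : Pˣ) : P) ∈
          ({((T 0 * T 3 * T 5 * T 2 : Pˣ) : P), ((T 1 * T 4 : Pˣ) : P),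
            (((T 0 * T 3 * T 5 * T 2 : Pˣ)⁻¹ : Pˣ) : P),
            (((T 1 * T 4 : Pˣ)⁻¹ : Pˣ) : P)} : Set P) := by
        right; left; rfl
      have hA' : (((T 0 * T 3 * T 5 * T 2 : Pˣ)⁻¹ : Pˣ) : P) ∈
          ({((T 0 * T 3 * T 5 * T 2 : Pˣ) : P), ((T 1 * T 4 : Pˣ) : P),
            (((T 0 * T 3 * T 5 * T 2 : Pˣ)⁻¹ : Pˣ) : P),
            (((T 1 * T 4 : Pˣ)⁻¹ : Pˣ) : P)} : Set P) := by
        right; right; left; rfl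
      have hB' : (((T 1 * T 4 : Pˣ)⁻¹ : Pˣ) : P) ∈
          ({((T 0 * T 3 * T 5 * T 2 : Pˣ) : P), ((T 1 * T 4 : Pˣ) : P),
            (((T 0 * T 3 * T 5 * T 2 : Pˣ)⁻¹ : Pˣ) : P),
            (((T 1 * T 4 : Pˣ)⁻¹ : Pˣ) : P)} : Set P) := by
        right; right; right; rfl
      exact mul_mem
        (zpow_val_mem (Algebra.subset_adjoin hA) (Algebra.subset_adjoin hA') (g 0))
        (zpow_val_mem (Algebra.subset_adjoin hB) (Algebra.subset_adjoin hB') (g 1))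
    · apply Algebra.adjoin_le
      rintro y hy
      rcases hy with rfl | rfl | rfl | rfl
      · exact hz1
      · exact hz2
      · exact inv_central hz1
      · exact inv_central hz2
  · have hinj : Function.Injective (fun p : ℤ × ℤ => gv p.1 p.2) := by
      intro p p' hpp
      have h0 : p.1 = p'.1 := congrFun hpp 0
      have h1 : p.2 = p'.2 := congrFun hpp 1
      exact Prod.ext h0 h1
    have hli2 := hli.comp _ hinj
    have key := hli2.units_smul (fun p : ℤ × ℤ => Classical.choose (hex p.1 p.2))
    have hfe : (fun p : ℤ × ℤ =>
        (((T 0 * T 3 * T 5 * T 2 : Pˣ) ^ p.1 * (T 1 * T 4 : Pˣ) ^ p.2 : Pˣ) : P))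
        = (fun p : ℤ × ℤ => Classical.choose (hex p.1 p.2)) •
          (tmono T ∘ fun p : ℤ × ℤ => gv p.1 p.2) := by
      funext p
      have hsp := Classical.choose_spec (hex p.1 p.2)
      rw [Pi.smul_apply', Units.smul_def]
      exact hsp
    rw [hfe]
    exact key
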